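/- Let a, γ, c, μ ∈ ℝ with γ ≠ 0, set β = −sign(γ), Γ = √|γ|, and Ω = −aγ, and assume Ω > 0. Define f₁ : (0,∞) × ℝ → ℝ² by f₁(r,w) = ( π a r w , (π/2)(4β + 4μw + γ r² + 2 c w²) ). Then f₁(2/Γ, 0) = (0,0), the Jacobian matrix of f₁ at (2/Γ, 0) equals [[0, 2πa/Γ], [−2πβΓ, 2πμ]], and its eigenvalues are λ^±(μ) = πμ ± (π/Γ)√(μ²Γ² − 4Ω). In particular, for every μ with |μ| < 2√Ω/Γ the eigenvalues form a complex conjugate pair with real part πμ and nonzero imaginary part ±(π/Γ)√(4Ω − μ²Γ²), and the derivative of the real part with respect to μ equals π ≠ 0. -/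

import Mathlib

/-- With `β = -sign γ`, `Γ = √|γ|`, `Ω = -aγ > 0`, the first-order
Melnikov function `f₁(r,w) = (πarw, (π/2)(4β + 4μw + γr² + 2cw²))` vanishes at
`(2/Γ, 0)`, its Jacobian there is `[[0, 2πa/Γ], [-2πβΓ, 2πμ]]`, whose eigenvalues `z`
are characterized by `(z - πμ)² = (π/Γ)²(μ²Γ² - 4Ω)`, i.e.
`λ± = πμ ± (π/Γ)√(μ²Γ² - 4Ω)`.  In particular, for every `ν` with `|ν| < 2√Ω/Γ` the
eigenvalues form a complex conjugate pair `πν ± i(π/Γ)√(4Ω - ν²Γ²)` with nonzero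
imaginary part, and the derivative of the real part `π·ν` with respect to `ν` is
`π ≠ 0`. -/
theorem stmt_5 (a γ c μ β Γ Ω : ℝ) (hγ : γ ≠ 0)
    (hβ : β = - Real.sign γ) (hΓ : Γ = Real.sqrt |γ|) (hΩ : Ω = -(a*γ)) (hΩpos : 0 < Ω)
    (f₁ : ℝ × ℝ → ℝ × ℝ)
    (hf₁ : f₁ = fun p => (Real.pi * a * p.1 * p.2,
      Real.pi/2 * (4*β + 4*μ*p.2 + γ*p.1^2 + 2*c*p.2^2))) :
    f₁ (2/Γ, 0) = (0, 0) ∧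
    HasFDerivAt f₁
      (((2*Real.pi*a/Γ) • ContinuousLinearMap.snd ℝ ℝ ℝ).prod
        ((-(2*Real.pi*β*Γ)) • ContinuousLinearMap.fst ℝ ℝ ℝ
          + (2*Real.pi*μ) • ContinuousLinearMap.snd ℝ ℝ ℝ)) (2/Γ, 0) ∧
    (∀ z : ℂ,
      Matrix.det (z • (1 : Matrix (Fin 2) (Fin 2) ℂ)
          - !![0, ((2*Real.pi*a/Γ : ℝ) : ℂ);
               ((-(2*Real.pi*β*Γ) : ℝ) : ℂ), ((2*Real.pi*μ : ℝ) : ℂ)]) = 0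
        ↔ (z - ((Real.pi*μ : ℝ) : ℂ))^2
            = ((Real.pi/Γ : ℝ) : ℂ)^2 * ((μ^2*Γ^2 - 4*Ω : ℝ) : ℂ)) ∧
    (∀ ν : ℝ, |ν| < 2*Real.sqrt Ω/Γ →
      (∀ z : ℂ,
        Matrix.det (z • (1 : Matrix (Fin 2) (Fin 2) ℂ)
            - !![0, ((2*Real.pi*a/Γ : ℝ) : ℂ);
                 ((-(2*Real.pi*β*Γ) : ℝ) : ℂ), ((2*Real.pi*ν : ℝ) : ℂ)]) = 0
          ↔ z = ((Real.pi*ν : ℝ) : ℂ)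
                + Complex.I * ((Real.pi/Γ * Real.sqrt (4*Ω - ν^2*Γ^2) : ℝ) : ℂ)
            ∨ z = ((Real.pi*ν : ℝ) : ℂ)
                - Complex.I * ((Real.pi/Γ * Real.sqrt (4*Ω - ν^2*Γ^2) : ℝ) : ℂ)) ∧
      Real.pi/Γ * Real.sqrt (4*Ω - ν^2*Γ^2) ≠ 0 ∧
      HasDerivAt (fun t : ℝ => Real.pi * t) Real.pi ν) ∧
    Real.pi ≠ 0 := by
  have hΓpos : 0 < Γ := hΓ ▸ Real.sqrt_pos.mpr (abs_pos.mpr hγ)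
  have hΓne : Γ ≠ 0 := ne_of_gt hΓpos
  have hΓsq : Γ ^ 2 = |γ| := by rw [hΓ, sq]; exact Real.mul_self_sqrt (abs_nonneg γ)
  have hsg : Real.sign γ * |γ| = γ := by
    rcases hγ.lt_or_gt with h | h
    · rw [Real.sign_of_neg h, abs_of_neg h]; ring
    · rw [Real.sign_of_pos h, abs_of_pos h]; ring
  have hbg : β * Γ ^ 2 = -γ := by rw [hβ, hΓsq]; linear_combination -hsg
  have habβ : a * β * Γ ^ 2 = Ω := by rw [hΩ]; linear_combination a * hbg
  have hΓC : (Γ : ℂ) ≠ 0 := by exact_mod_cast hΓne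
  have hpi : Real.pi ≠ 0 := Real.pi_ne_zero
  refine ⟨?_, ?_, ?_, ?_, hpi⟩
  · -- f₁ vanishes at (2/Γ, 0)
    rw [hf₁]
    refine Prod.ext (by simp) ?_
    show Real.pi/2 * (4*β + 4*μ*0 + γ*(2/Γ)^2 + 2*c*0^2) = 0
    have : 4*β + 4*μ*0 + γ*(2/Γ)^2 + 2*c*0^2 = 0 := by
      field_simp
      linear_combination 4 * hbg
    rw [this, mul_zero]
  · -- derivative
    rw [hf₁]
    have h1 : HasFDerivAt (fun p : ℝ × ℝ => Real.pi * a * p.1 * p.2)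
        ((Real.pi * a) • (((2/Γ, 0) : ℝ × ℝ).1 • ContinuousLinearMap.snd ℝ ℝ ℝ
          + ((2/Γ, 0) : ℝ × ℝ).2 • ContinuousLinearMap.fst ℝ ℝ ℝ)) ((2/Γ, 0) : ℝ × ℝ) := by
      have := ((hasFDerivAt_fst (𝕜 := ℝ) (E := ℝ) (F := ℝ)).mul
        (hasFDerivAt_snd (𝕜 := ℝ))).const_mul (Real.pi * a) (x := ((2/Γ, 0) : ℝ × ℝ))
      refine this.congr_of_eventuallyEq (Filter.Eventually.of_forall fun p => ?_)
      simp only [Pi.mul_apply, Pi.add_apply]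
      ring
    have h2 : HasFDerivAt (fun p : ℝ × ℝ =>
        Real.pi/2 * (4*β + 4*μ*p.2 + γ*p.1^2 + 2*c*p.2^2))
        ((Real.pi/2) • (((0 : ℝ × ℝ →L[ℝ] ℝ)
          + (4*μ) • ContinuousLinearMap.snd ℝ ℝ ℝ)
          + γ • (((2/Γ, 0) : ℝ × ℝ).1 • ContinuousLinearMap.fst ℝ ℝ ℝ
              + ((2/Γ, 0) : ℝ × ℝ).1 • ContinuousLinearMap.fst ℝ ℝ ℝ)
          + (2*c) • (((2/Γ, 0) : ℝ × ℝ).2 • ContinuousLinearMap.snd ℝ ℝ ℝ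
              + ((2/Γ, 0) : ℝ × ℝ).2 • ContinuousLinearMap.snd ℝ ℝ ℝ)))
        ((2/Γ, 0) : ℝ × ℝ) := by
      have := ((((hasFDerivAt_const (4*β) ((2/Γ, 0) : ℝ × ℝ)).add
          ((hasFDerivAt_snd (𝕜 := ℝ)).const_mul (4*μ))).add
          (((hasFDerivAt_fst (𝕜 := ℝ)).mul (hasFDerivAt_fst (𝕜 := ℝ))).const_mul γ)).add
          (((hasFDerivAt_snd (𝕜 := ℝ)).mul
            (hasFDerivAt_snd (𝕜 := ℝ))).const_mul (2*c))).const_mul (Real.pi/2)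
      refine this.congr_of_eventuallyEq (Filter.Eventually.of_forall fun p => ?_)
      simp only [Pi.mul_apply, Pi.add_apply]
      ring
    have := h1.prodMk h2
    refine this.congr_fderiv ?_
    symm
    apply ContinuousLinearMap.ext
    intro x
    refine Prod.ext ?_ ?_
    · simp only [ContinuousLinearMap.prod_apply, ContinuousLinearMap.smul_apply,
        ContinuousLinearMap.add_apply, ContinuousLinearMap.coe_fst',
        ContinuousLinearMap.coe_snd', smul_eq_mul]
      ring
    · simp only [ContinuousLinearMap.prod_apply, ContinuousLinearMap.smul_apply,
        ContinuousLinearMap.add_apply, ContinuousLinearMap.zero_apply,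
        ContinuousLinearMap.coe_fst', ContinuousLinearMap.coe_snd', smul_eq_mul]
      field_simp
      linear_combination (-4 * x.1) * hbg
  · -- eigenvalue characterization
    intro z
    have hdet : (z • (1 : Matrix (Fin 2) (Fin 2) ℂ)
        - !![0, ((2*Real.pi*a/Γ : ℝ) : ℂ);
             ((-(2*Real.pi*β*Γ) : ℝ) : ℂ), ((2*Real.pi*μ : ℝ) : ℂ)]).det
        = (z - ((Real.pi*μ : ℝ) : ℂ))^2
          - ((Real.pi/Γ : ℝ) : ℂ)^2 * ((μ^2*Γ^2 - 4*Ω : ℝ) : ℂ) := by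
      have : (z • (1 : Matrix (Fin 2) (Fin 2) ℂ)
          - !![0, ((2*Real.pi*a/Γ : ℝ) : ℂ);
               ((-(2*Real.pi*β*Γ) : ℝ) : ℂ), ((2*Real.pi*μ : ℝ) : ℂ)])
          = !![z - 0, -((2*Real.pi*a/Γ : ℝ) : ℂ);
               -((-(2*Real.pi*β*Γ) : ℝ) : ℂ), z - ((2*Real.pi*μ : ℝ) : ℂ)] := by
        ext i j
        fin_cases i <;> fin_cases j <;>
          simp [Matrix.one_apply, Matrix.smul_apply, Matrix.sub_apply]
      rw [this, Matrix.det_fin_two_of]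
      have hcR : (2*Real.pi*a/Γ) * (-(2*Real.pi*β*Γ))
          = -(Real.pi*μ)^2 + (Real.pi/Γ)^2*(μ^2*Γ^2-4*Ω) := by
        have h4 : ((2*Real.pi*a/Γ) * (-(2*Real.pi*β*Γ))) * Γ^2
            = (-(Real.pi*μ)^2 + (Real.pi/Γ)^2*(μ^2*Γ^2-4*Ω)) * Γ^2 := by
          field_simp
          linear_combination (-4) * habβ
        exact mul_right_cancel₀ (pow_ne_zero 2 hΓne) h4
      have hcC : ((2*Real.pi*a/Γ : ℝ) : ℂ) * ((-(2*Real.pi*β*Γ) : ℝ) : ℂ)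
          = -(((Real.pi*μ : ℝ) : ℂ))^2 + (((Real.pi/Γ : ℝ) : ℂ))^2 * ((μ^2*Γ^2-4*Ω : ℝ) : ℂ) := by
        exact_mod_cast hcR
      push_cast at hcC ⊢
      linear_combination -hcC
    rw [hdet, sub_eq_zero]
  · -- conjugate pair for |ν| small
    intro ν hν
    have hΩnn : (0:ℝ) ≤ Ω := le_of_lt hΩpos
    have hlt : ν^2 * Γ^2 < 4 * Ω := by
      have h1 : |ν| * Γ < 2 * Real.sqrt Ω := by
        rw [lt_div_iff₀ hΓpos] at hν
        exact hν
      have h2 : (0:ℝ) ≤ |ν| := abs_nonneg ν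
      have h3 : Real.sqrt Ω * Real.sqrt Ω = Ω := Real.mul_self_sqrt hΩnn
      have h4 := mul_lt_mul'' h1 h1 (mul_nonneg h2 hΓpos.le) (mul_nonneg h2 hΓpos.le)
      nlinarith [sq_abs ν, h3]
    have hnn : (0:ℝ) ≤ 4*Ω - ν^2*Γ^2 := by linarith
    have hKpos : 0 < Real.pi/Γ * Real.sqrt (4*Ω - ν^2*Γ^2) := by
      apply mul_pos (div_pos Real.pi_pos hΓpos)
      exact Real.sqrt_pos.mpr (by linarith)
    have hKsq : (Real.pi/Γ * Real.sqrt (4*Ω - ν^2*Γ^2))^2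
        = (Real.pi/Γ)^2 * (4*Ω - ν^2*Γ^2) := by
      rw [mul_pow, Real.sq_sqrt hnn]
    obtain ⟨S, hSdef⟩ : ∃ S, Real.sqrt (4*Ω - ν^2*Γ^2) = S := ⟨_, rfl⟩
    rw [hSdef] at hKpos hKsq ⊢
    have hS2 : S^2 = 4*Ω - ν^2*Γ^2 := by rw [← hSdef]; exact Real.sq_sqrt hnn
    refine ⟨?_, ne_of_gt hKpos, ?_⟩
    · intro z
      have hdet : (z • (1 : Matrix (Fin 2) (Fin 2) ℂ)
          - !![0, ((2*Real.pi*a/Γ : ℝ) : ℂ);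
               ((-(2*Real.pi*β*Γ) : ℝ) : ℂ), ((2*Real.pi*ν : ℝ) : ℂ)]).det
          = (z - (((Real.pi*ν : ℝ) : ℂ) + Complex.I * ((Real.pi/Γ * S : ℝ) : ℂ)))
            * (z - (((Real.pi*ν : ℝ) : ℂ) - Complex.I * ((Real.pi/Γ * S : ℝ) : ℂ))) := by
        have : (z • (1 : Matrix (Fin 2) (Fin 2) ℂ)
            - !![0, ((2*Real.pi*a/Γ : ℝ) : ℂ);
                 ((-(2*Real.pi*β*Γ) : ℝ) : ℂ), ((2*Real.pi*ν : ℝ) : ℂ)])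
            = !![z - 0, -((2*Real.pi*a/Γ : ℝ) : ℂ);
                 -((-(2*Real.pi*β*Γ) : ℝ) : ℂ), z - ((2*Real.pi*ν : ℝ) : ℂ)] := by
          ext i j
          fin_cases i <;> fin_cases j <;>
            simp [Matrix.one_apply, Matrix.smul_apply, Matrix.sub_apply]
        rw [this, Matrix.det_fin_two_of]
        have hcR : (2*Real.pi*a/Γ) * (-(2*Real.pi*β*Γ))
            = -((Real.pi*ν)^2 + (Real.pi/Γ * S)^2) := by
          have h4 : ((2*Real.pi*a/Γ) * (-(2*Real.pi*β*Γ))) * Γ^2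
              = (-((Real.pi*ν)^2 + (Real.pi/Γ * S)^2)) * Γ^2 := by
            field_simp
            linear_combination (-4) * habβ + hS2
          exact mul_right_cancel₀ (pow_ne_zero 2 hΓne) h4
        have hcC : ((2*Real.pi*a/Γ : ℝ) : ℂ) * ((-(2*Real.pi*β*Γ) : ℝ) : ℂ)
            = -((((Real.pi*ν : ℝ) : ℂ))^2 + (((Real.pi/Γ * S : ℝ) : ℂ))^2) := by
          exact_mod_cast hcR
        have hI : Complex.I^2 = -1 := Complex.I_sq
        push_cast at hcC ⊢
        linear_combination -hcC + ((Real.pi : ℂ)/(Γ : ℂ) * (S : ℂ))^2 * hI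
      rw [hdet, mul_eq_zero, sub_eq_zero, sub_eq_zero]
    · simpa using (hasDerivAt_id ν).const_mul Real.pi
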